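/- If $\nu$ is a measure on $\mathbb{R}^d$ satisfying $\int_{|y|\leq r}|\langle\theta,y\rangle|^2\,\nu(dy)\geq c\,r^{2-\alpha}$ for all $r\leq 1$ and all unit vectors $\theta$, then $\Phi(\xi)=\int(1-\cos\langle\xi,y\rangle)\,\nu(dy)$ satisfies $\Phi(\xi)\geq c'\,|\xi|^{\alpha}$ for all $|\xi|>1$, for some constant $c'>0$. -/

import Mathlib

open MeasureTheory Set

/-- If `∫_{|y|≤r} |⟨θ,y⟩|² ν(dy) ≥ c r^{2-α}` for all `r ≤ 1` and
unit vectors `θ`, then `Φ(ξ) = ∫ (1-cos⟨ξ,y⟩) ν(dy)` satisfies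
`Φ(ξ) ≥ c' |ξ|^α` for `|ξ| > 1`. -/
theorem stmt14 (d : ℕ) (hd : 1 ≤ d) (α c : ℝ)
    (hα : α ∈ Set.Ioo (0:ℝ) 2) (hc : 0 < c)
    (ν : Measure (EuclideanSpace ℝ (Fin d)))
    (hlevy : ∫⁻ y, ENNReal.ofReal (min 1 (‖y‖ ^ 2)) ∂ν < ⊤)
    (hlow : ∀ r : ℝ, 0 < r → r ≤ 1 → ∀ θ : EuclideanSpace ℝ (Fin d), ‖θ‖ = 1 →
      ENNReal.ofReal (c * r ^ (2 - α)) ≤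
        ∫⁻ y in Metric.closedBall (0 : EuclideanSpace ℝ (Fin d)) r,
          ENNReal.ofReal ((inner ℝ θ y : ℝ) ^ 2) ∂ν)
    (Φ : EuclideanSpace ℝ (Fin d) → ℝ)
    (hΦ : ∀ ξ, Φ ξ = (∫⁻ y, ENNReal.ofReal (1 - Real.cos (inner ℝ ξ y : ℝ)) ∂ν).toReal) :
    ∃ c' : ℝ, 0 < c' ∧ ∀ ξ : EuclideanSpace ℝ (Fin d), 1 < ‖ξ‖ →
      c' * ‖ξ‖ ^ α ≤ Φ ξ := by
  have hπ : (0:ℝ) < Real.pi := Real.pi_pos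
  refine ⟨c * (2 / Real.pi ^ 2), by positivity, ?_⟩
  intro ξ hξ
  have hξ0 : (0:ℝ) < ‖ξ‖ := lt_trans one_pos hξ
  set r : ℝ := ‖ξ‖⁻¹ with hr
  have hr0 : 0 < r := inv_pos.2 hξ0
  have hr1 : r ≤ 1 := by
    rw [hr]
    exact inv_le_one_of_one_le₀ hξ.le
  set θ : EuclideanSpace ℝ (Fin d) := ‖ξ‖⁻¹ • ξ with hθdef
  have hθ : ‖θ‖ = 1 := by
    rw [hθdef, norm_smul, norm_inv, norm_norm, inv_mul_cancel₀ hξ0.ne']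
  -- Finiteness of the full integral
  set K : ℝ := max 2 (‖ξ‖ ^ 2 / 2) with hK
  have hK0 : 0 ≤ K := le_trans (by norm_num) (le_max_left _ _)
  have hfin : ∫⁻ y, ENNReal.ofReal (1 - Real.cos (inner ℝ ξ y : ℝ)) ∂ν < ⊤ := by
    have hbound : ∀ y : EuclideanSpace ℝ (Fin d),
        ENNReal.ofReal (1 - Real.cos (inner ℝ ξ y : ℝ)) ≤
          ENNReal.ofReal K * ENNReal.ofReal (min 1 (‖y‖ ^ 2)) := by
      intro y
      rw [← ENNReal.ofReal_mul hK0]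
      apply ENNReal.ofReal_le_ofReal
      rcases le_or_gt (‖y‖) 1 with h1 | h1
      · have hmin : min 1 (‖y‖ ^ 2) = ‖y‖ ^ 2 := by
          apply min_eq_right
          nlinarith [norm_nonneg y]
        rw [hmin]
        have h2 : 1 - Real.cos (inner ℝ ξ y : ℝ) ≤ (inner ℝ ξ y : ℝ) ^ 2 / 2 := by
          have := Real.one_sub_sq_div_two_le_cos (x := (inner ℝ ξ y : ℝ))
          linarith
        have h3 : (inner ℝ ξ y : ℝ) ^ 2 ≤ ‖ξ‖ ^ 2 * ‖y‖ ^ 2 := by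
          have := abs_real_inner_le_norm ξ y
          nlinarith [abs_nonneg (inner ℝ ξ y : ℝ), sq_abs (inner ℝ ξ y : ℝ)]
        have h4 : ‖ξ‖ ^ 2 / 2 ≤ K := le_max_right _ _
        nlinarith [sq_nonneg (‖y‖), norm_nonneg y]
      · have hmin : min 1 (‖y‖ ^ 2) = 1 := by
          apply min_eq_left
          nlinarith
        rw [hmin, mul_one]
        have := Real.neg_one_le_cos (inner ℝ ξ y : ℝ)
        have h4 : (2:ℝ) ≤ K := le_max_left _ _
        linarith
    calc ∫⁻ y, ENNReal.ofReal (1 - Real.cos (inner ℝ ξ y : ℝ)) ∂ν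
        ≤ ∫⁻ y, ENNReal.ofReal K * ENNReal.ofReal (min 1 (‖y‖ ^ 2)) ∂ν :=
          lintegral_mono hbound
      _ = ENNReal.ofReal K * ∫⁻ y, ENNReal.ofReal (min 1 (‖y‖ ^ 2)) ∂ν :=
          lintegral_const_mul' _ _ ENNReal.ofReal_ne_top
      _ < ⊤ := ENNReal.mul_lt_top ENNReal.ofReal_lt_top hlevy
  -- Lower bound
  have hmain : ENNReal.ofReal (c * (2 / Real.pi ^ 2) * ‖ξ‖ ^ α) ≤
      ∫⁻ y, ENNReal.ofReal (1 - Real.cos (inner ℝ ξ y : ℝ)) ∂ν := by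
    have hpt : ∀ y ∈ Metric.closedBall (0 : EuclideanSpace ℝ (Fin d)) r,
        ENNReal.ofReal (2 / Real.pi ^ 2 * ‖ξ‖ ^ 2) *
          ENNReal.ofReal ((inner ℝ θ y : ℝ) ^ 2) ≤
        ENNReal.ofReal (1 - Real.cos (inner ℝ ξ y : ℝ)) := by
      intro y hy
      rw [Metric.mem_closedBall, dist_zero_right] at hy
      rw [← ENNReal.ofReal_mul (by positivity)]
      apply ENNReal.ofReal_le_ofReal
      have hinner : (inner ℝ ξ y : ℝ) = ‖ξ‖ * (inner ℝ θ y : ℝ) := by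
        rw [hθdef, real_inner_smul_left]
        field_simp
      have habs : |(inner ℝ ξ y : ℝ)| ≤ 1 := by
        have := abs_real_inner_le_norm ξ y
        have h2 : ‖ξ‖ * ‖y‖ ≤ ‖ξ‖ * r := by
          apply mul_le_mul_of_nonneg_left hy hξ0.le
        have h3 : ‖ξ‖ * r = 1 := mul_inv_cancel₀ hξ0.ne'
        linarith
      have hπ1 : (1:ℝ) ≤ Real.pi := by linarith [Real.pi_gt_three]
      have hcos := Real.cos_le_one_sub_mul_cos_sq (x := (inner ℝ ξ y : ℝ))
        (le_trans habs hπ1)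
      have : 2 / Real.pi ^ 2 * (inner ℝ ξ y : ℝ) ^ 2 ≤
          1 - Real.cos (inner ℝ ξ y : ℝ) := by linarith
      calc 2 / Real.pi ^ 2 * ‖ξ‖ ^ 2 * (inner ℝ θ y : ℝ) ^ 2
          = 2 / Real.pi ^ 2 * (inner ℝ ξ y : ℝ) ^ 2 := by
            rw [hinner]; ring
        _ ≤ 1 - Real.cos (inner ℝ ξ y : ℝ) := this
    calc ENNReal.ofReal (c * (2 / Real.pi ^ 2) * ‖ξ‖ ^ α)
        = ENNReal.ofReal (2 / Real.pi ^ 2 * ‖ξ‖ ^ 2) *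
            ENNReal.ofReal (c * r ^ (2 - α)) := by
          rw [← ENNReal.ofReal_mul (by positivity)]
          congr 1
          rw [hr, ← Real.rpow_natCast (‖ξ‖) 2, Nat.cast_ofNat,
            Real.inv_rpow hξ0.le, ← Real.rpow_neg hξ0.le,
            show 2 / Real.pi ^ 2 * ‖ξ‖ ^ (2:ℝ) * (c * ‖ξ‖ ^ (-(2 - α))) =
              c * (2 / Real.pi ^ 2) * (‖ξ‖ ^ (2:ℝ) * ‖ξ‖ ^ (-(2 - α))) from by ring,
            ← Real.rpow_add hξ0]
          norm_num
      _ ≤ ENNReal.ofReal (2 / Real.pi ^ 2 * ‖ξ‖ ^ 2) *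
            ∫⁻ y in Metric.closedBall (0 : EuclideanSpace ℝ (Fin d)) r,
              ENNReal.ofReal ((inner ℝ θ y : ℝ) ^ 2) ∂ν := by
          exact mul_le_mul_right (hlow r hr0 hr1 θ hθ) _
      _ = ∫⁻ y in Metric.closedBall (0 : EuclideanSpace ℝ (Fin d)) r,
            ENNReal.ofReal (2 / Real.pi ^ 2 * ‖ξ‖ ^ 2) *
              ENNReal.ofReal ((inner ℝ θ y : ℝ) ^ 2) ∂ν :=
          (lintegral_const_mul' _ _ ENNReal.ofReal_ne_top).symm
      _ ≤ ∫⁻ y in Metric.closedBall (0 : EuclideanSpace ℝ (Fin d)) r,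
            ENNReal.ofReal (1 - Real.cos (inner ℝ ξ y : ℝ)) ∂ν := by
          apply lintegral_mono_ae
          filter_upwards [ae_restrict_mem measurableSet_closedBall]
            with y hy using hpt y hy
      _ ≤ ∫⁻ y, ENNReal.ofReal (1 - Real.cos (inner ℝ ξ y : ℝ)) ∂ν :=
          lintegral_mono' Measure.restrict_le_self le_rfl
  rw [hΦ]
  calc c * (2 / Real.pi ^ 2) * ‖ξ‖ ^ α
      = (ENNReal.ofReal (c * (2 / Real.pi ^ 2) * ‖ξ‖ ^ α)).toReal := by
        rw [ENNReal.toReal_ofReal (by positivity)]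
    _ ≤ (∫⁻ y, ENNReal.ofReal (1 - Real.cos (inner ℝ ξ y : ℝ)) ∂ν).toReal :=
        ENNReal.toReal_mono hfin.ne hmain
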